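/- arXiv:2105.07070 — 2 statements merged into one kernel-verified Lean document; each statement's English description precedes it below -/
import Mathlib

section
/- Let pC^1_j, j=1..m, be linear constraint operators acting only on the first variable of bivariate functions, and pC^2_i, i=1..n, acting only on the second variable, each with switching functions pφ^1_j, pφ^2_i satisfying pC^1_j[pφ^1_k] = δ_{jk}, pC^2_i[pφ^2_k] = δ_{ik}, and with constraint values pκ^1_j(y), pκ^2_i(x) that are consistent (pC^1_j[pκ^2_i] = pC^2_i[pκ^1_j]). Assume the constraint operators of different variables commute on the free function g and each operator acting on a product f·h where f does not depend on its variable satisfies pC[f·h] = f·pC[h]. Then the recursive composition u = pU^1(pU^2(g)), where pU^k(g)(x,y) = g(x,y) + Σ_j pφ^k_j · (pκ^k_j − pC^k_j[g]), satisfies all constraints of both variables: pC^1_j[u] = pκ^1_j and pC^2_i[u] = pκ^2_i. -/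
private lemma Lsum {n : ℕ} (C : (ℝ → ℝ → ℝ) →ₗ[ℝ] (ℝ → ℝ → ℝ)) (a : ℝ → ℝ → ℝ)
    (b : Fin n → ℝ → ℝ → ℝ) (x y : ℝ) :
    C (fun x' y' => a x' y' + ∑ k, b k x' y') x y = C a x y + ∑ k, C (b k) x y := by
  have h1 : (fun x' y' => a x' y' + ∑ k, b k x' y') = a + ∑ k, b k := by
    funext x' y'; simp
  rw [h1, map_add, map_sum]
  simp

private lemma Lsub (C : (ℝ → ℝ → ℝ) →ₗ[ℝ] (ℝ → ℝ → ℝ)) (p q : ℝ → ℝ → ℝ) (x y : ℝ) :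
    C (fun x' y' => p x' y' - q x' y') x y = C p x y - C q x y := by
  have h1 : (fun x' y' => p x' y' - q x' y') = p - q := rfl
  rw [h1, map_sub]; rfl

/-- Recursive construction of bivariate constrained expressions: using the univariate
constrained expression of one variable as the free function in the univariate
constrained expression of the other variable satisfies both sets of constraints. -/
theorem recursive_bivariate_constrained_expression (m n : ℕ)
    -- constraint operators acting only on the first variable (output independent of it)
    (C1 : Fin m → ((ℝ → ℝ → ℝ) →ₗ[ℝ] (ℝ → ℝ → ℝ)))
    -- constraint operators acting only on the second variable (output independent of it)
    (C2 : Fin n → ((ℝ → ℝ → ℝ) →ₗ[ℝ] (ℝ → ℝ → ℝ)))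
    (φ1 : Fin m → ℝ → ℝ) (φ2 : Fin n → ℝ → ℝ)
    (κ1 : Fin m → ℝ → ℝ) (κ2 : Fin n → ℝ → ℝ)
    (g : ℝ → ℝ → ℝ)
    -- the operators consume their own variable
    (hind1 : ∀ j h x x' y, C1 j h x y = C1 j h x' y)
    (hind2 : ∀ i h x y y', C2 i h x y = C2 i h x y')
    -- Kronecker delta property of the switching functions
    (hφ1 : ∀ j k x y, C1 j (fun x' _ => φ1 k x') x y = if j = k then 1 else 0)
    (hφ2 : ∀ i k x y, C2 i (fun _ y' => φ2 k y') x y = if i = k then 1 else 0)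
    -- factors not depending on the operated variable pass through the operator
    (hmul1 : ∀ j (f : ℝ → ℝ) (h : ℝ → ℝ → ℝ) x y,
      C1 j (fun x' y' => f y' * h x' y') x y = f y * C1 j h x y)
    (hmul2 : ∀ i (f : ℝ → ℝ) (h : ℝ → ℝ → ℝ) x y,
      C2 i (fun x' y' => f x' * h x' y') x y = f x * C2 i h x y)
    -- consistency of the constraints
    (hcons : ∀ j i x y, C1 j (fun x' _ => κ2 i x') x y = C2 i (fun _ y' => κ1 j y') x y)
    -- the constraint operators of different variables commute on the free function
    (hcomm : ∀ j i, C1 j (C2 i g) = C2 i (C1 j g))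
    (U2 : ℝ → ℝ → ℝ) (hU2 : U2 = fun x y => g x y + ∑ i, φ2 i y * (κ2 i x - C2 i g x y))
    (u : ℝ → ℝ → ℝ) (hu : u = fun x y => U2 x y + ∑ j, φ1 j x * (κ1 j y - C1 j U2 x y)) :
    (∀ j x y, C1 j u x y = κ1 j y) ∧ (∀ i x y, C2 i u x y = κ2 i x) := by
  -- C2 applied to U2 gives κ2
  have hC2U2 : ∀ i x y, C2 i U2 x y = κ2 i x := by
    intro i x y
    have h0 : C2 i U2 x y
        = C2 i g x y + ∑ k, C2 i (fun x' y' => φ2 k y' * (κ2 k x' - C2 k g x' y')) x y := by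
      rw [hU2]; exact Lsum (C2 i) g _ x y
    have hterm : ∀ k, C2 i (fun x' y' => φ2 k y' * (κ2 k x' - C2 k g x' y')) x y
        = (κ2 k x - C2 k g x y) * (if i = k then 1 else 0) := by
      intro k
      have hfe : (fun x' y' => φ2 k y' * (κ2 k x' - C2 k g x' y'))
          = fun x' y' => (fun x'' => κ2 k x'' - C2 k g x'' y) x' * φ2 k y' := by
        funext x' y'; rw [hind2 k g x' y' y]; ring
      rw [hfe, hmul2 i _ (fun _ y' => φ2 k y') x y, hφ2 i k x y]
    rw [h0]
    simp only [hterm, mul_ite, mul_one, mul_zero, Finset.sum_ite_eq, Finset.mem_univ, if_true]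
    ring
  -- C1 applied to U2
  have hC1U2 : ∀ j x y, C1 j U2 x y
      = C1 j g x y + ∑ k, φ2 k y * (C2 k (fun _ y' => κ1 j y') x y - C2 k (C1 j g) x y) := by
    intro j x y
    have h0 : C1 j U2 x y
        = C1 j g x y + ∑ k, C1 j (fun x' y' => φ2 k y' * (κ2 k x' - C2 k g x' y')) x y := by
      rw [hU2]; exact Lsum (C1 j) g _ x y
    have hterm : ∀ k, C1 j (fun x' y' => φ2 k y' * (κ2 k x' - C2 k g x' y')) x y
        = φ2 k y * (C2 k (fun _ y' => κ1 j y') x y - C2 k (C1 j g) x y) := by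
      intro k
      rw [hmul1 j (φ2 k) (fun x' y' => κ2 k x' - C2 k g x' y') x y,
        Lsub (C1 j) (fun x' _ => κ2 k x') (C2 k g) x y, hcons j k x y, hcomm j k]
    rw [h0]
    simp only [hterm]
  constructor
  · intro j x y
    have h0 : C1 j u x y
        = C1 j U2 x y + ∑ k, C1 j (fun x' y' => φ1 k x' * (κ1 k y' - C1 k U2 x' y')) x y := by
      rw [hu]; exact Lsum (C1 j) U2 _ x y
    have hterm : ∀ k, C1 j (fun x' y' => φ1 k x' * (κ1 k y' - C1 k U2 x' y')) x y
        = (κ1 k y - C1 k U2 x y) * (if j = k then 1 else 0) := by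
      intro k
      have hfe : (fun x' y' => φ1 k x' * (κ1 k y' - C1 k U2 x' y'))
          = fun x' y' => (fun y'' => κ1 k y'' - C1 k U2 x y'') y' * φ1 k x' := by
        funext x' y'; rw [hind1 k U2 x' x y']; ring
      rw [hfe, hmul1 j _ (fun x' _ => φ1 k x') x y, hφ1 j k x y]
    rw [h0]
    simp only [hterm, mul_ite, mul_one, mul_zero, Finset.sum_ite_eq, Finset.mem_univ, if_true]
    ring
  · intro i x y
    have h0 : C2 i u x y
        = C2 i U2 x y + ∑ k, C2 i (fun x' y' => φ1 k x' * (κ1 k y' - C1 k U2 x' y')) x y := by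
      rw [hu]; exact Lsum (C2 i) U2 _ x y
    -- C2 i (C1 j U2) = C2 i (κ1 j as function of y)
    have hkey : ∀ j, C2 i (C1 j U2) x y = C2 i (fun _ y' => κ1 j y') x y := by
      intro j
      have hfe : C1 j U2 = fun x' y' => C1 j g x' y'
          + ∑ k, φ2 k y' * (C2 k (fun _ y'' => κ1 j y'') x' y' - C2 k (C1 j g) x' y') := by
        funext x' y'; exact hC1U2 j x' y'
      rw [hfe, Lsum (C2 i) (C1 j g)
        (fun k => fun x' y' => φ2 k y' * (C2 k (fun _ y'' => κ1 j y'') x' y' - C2 k (C1 j g) x' y')) x y]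
      have hterm : ∀ k, C2 i (fun x' y' =>
          φ2 k y' * (C2 k (fun _ y'' => κ1 j y'') x' y' - C2 k (C1 j g) x' y')) x y
          = (C2 k (fun _ y'' => κ1 j y'') x y - C2 k (C1 j g) x y) * (if i = k then 1 else 0) := by
        intro k
        have hfe2 : (fun x' y' =>
            φ2 k y' * (C2 k (fun _ y'' => κ1 j y'') x' y' - C2 k (C1 j g) x' y'))
            = fun x' y' => (fun x'' => C2 k (fun _ y'' => κ1 j y'') x'' y - C2 k (C1 j g) x'' y) x'
                * φ2 k y' := by
          funext x' y'
          rw [hind2 k (fun _ y'' => κ1 j y'') x' y' y, hind2 k (C1 j g) x' y' y]; ring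
        rw [hfe2, hmul2 i _ (fun _ y' => φ2 k y') x y, hφ2 i k x y]
      simp only [hterm, mul_ite, mul_one, mul_zero, Finset.sum_ite_eq, Finset.mem_univ, if_true]
      ring
    have hterm : ∀ k, C2 i (fun x' y' => φ1 k x' * (κ1 k y' - C1 k U2 x' y')) x y = 0 := by
      intro k
      rw [hmul2 i (φ1 k) (fun x' y' => κ1 k y' - C1 k U2 x' y') x y,
        Lsub (C2 i) (fun _ y' => κ1 k y') (C1 k U2) x y, hkey k]
      ring
    rw [h0]
    simp only [hterm, Finset.sum_const_zero, add_zero]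
    exact hC2U2 i x y
end

section
/- The Legendre polynomials L_k defined by L_0 = 1, L_1(z) = z, and (k+1)L_{k+1}(z) = (2k+1)z·L_k(z) − k·L_{k−1}(z) satisfy the orthogonality relation ∫_{−1}^{1} L_i(z) L_j(z) dz = (2/(2i+1))·δ_{ij}. -/
open Polynomial

noncomputable def legP : ℕ → Polynomial ℝ
  | 0 => 1
  | 1 => X
  | (k + 2) => C (((k:ℝ) + 2))⁻¹ *
      (C (2 * (k:ℝ) + 3) * (X * legP (k + 1)) - C ((k:ℝ) + 1) * legP k)

lemma bonnet (k : ℕ) : C ((k:ℝ) + 2) * legP (k + 2) =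
    C (2 * (k:ℝ) + 3) * (X * legP (k + 1)) - C ((k:ℝ) + 1) * legP k := by
  have h : ((k:ℝ) + 2) ≠ 0 := by positivity
  rw [legP, ← mul_assoc, ← C_mul, mul_inv_cancel₀ h, C_1, one_mul]

noncomputable def legendreL : ℕ → ℝ → ℝ
  | 0, _ => 1
  | 1, z => z
  | (k + 2), z =>
      ((2 * (k + 1 : ℝ) + 1) * z * legendreL (k + 1) z - (k + 1 : ℝ) * legendreL k z) /
        ((k + 1 : ℝ) + 1)

theorem legendreL_eq : ∀ (k : ℕ) (z : ℝ), legendreL k z = (legP k).eval z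
  | 0, z => by simp [legendreL, legP]
  | 1, z => by simp [legendreL, legP]
  | (k + 2), z => by
    have h1 := legendreL_eq (k + 1) z
    have h2 := legendreL_eq k z
    have h : ((k:ℝ) + 2) ≠ 0 := by positivity
    simp only [legendreL, legP, h1, h2, eval_mul, eval_sub, eval_C, eval_X]
    field_simp
    ring

theorem legP_eval_one : ∀ k : ℕ, (legP k).eval 1 = 1
  | 0 => by simp [legP]
  | 1 => by simp [legP]
  | (k + 2) => by
    have h1 := legP_eval_one (k + 1)
    have h2 := legP_eval_one k
    have h : ((k:ℝ) + 2) ≠ 0 := by positivity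
    simp only [legP, eval_mul, eval_sub, eval_C, eval_X, h1, h2]
    field_simp
    ring

theorem legP_eval_negone : ∀ k : ℕ, (legP k).eval (-1) = (-1) ^ k
  | 0 => by simp [legP]
  | 1 => by simp [legP]
  | (k + 2) => by
    have h1 := legP_eval_negone (k + 1)
    have h2 := legP_eval_negone k
    have h : ((k:ℝ) + 2) ≠ 0 := by positivity
    simp only [legP, eval_mul, eval_sub, eval_C, eval_X, h1, h2]
    rw [pow_succ, pow_succ]
    field_simp
    ring

theorem legP_natDegree : ∀ k : ℕ, (legP k).natDegree ≤ k
  | 0 => by simp [legP]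
  | 1 => by simp [legP]
  | (k + 2) => by
    have h1 := legP_natDegree (k + 1)
    have h2 := legP_natDegree k
    rw [legP]
    refine le_trans (natDegree_C_mul_le _ _) (le_trans (natDegree_sub_le _ _) ?_)
    refine max_le (le_trans (natDegree_C_mul_le _ _) ?_) (le_trans (natDegree_C_mul_le _ _) (by omega))
    refine le_trans (natDegree_mul_le) ?_
    rw [natDegree_X]; omega

lemma diffBonnet (k : ℕ) : C ((k:ℝ) + 2) * derivative (legP (k + 2)) =
    C (2 * (k:ℝ) + 3) * (legP (k + 1) + X * derivative (legP (k + 1))) -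
      C ((k:ℝ) + 1) * derivative (legP k) := by
  have h := congrArg derivative (bonnet k)
  simp only [derivative_mul, derivative_C, derivative_sub, derivative_X, zero_mul, one_mul,
    zero_add] at h
  apply Polynomial.funext; intro z
  have h' := congrArg (eval z) h
  simp only [eval_mul, eval_add, eval_sub, eval_C, eval_X] at h' ⊢
  linear_combination h'

lemma Tst_of (k : ℕ)
    (h : X * derivative (legP (k + 1)) = derivative (legP k) + C ((k:ℝ) + 1) * legP (k + 1)) :
    derivative (legP (k + 2)) = derivative (legP k) + C (2 * (k:ℝ) + 3) * legP (k + 1) := by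
  apply Polynomial.funext; intro z
  have hb := congrArg (eval z) (diffBonnet k)
  have hd := congrArg (eval z) h
  simp only [eval_mul, eval_add, eval_sub, eval_C, eval_X] at hb hd ⊢
  have hk : ((k:ℝ) + 2) ≠ 0 := by positivity
  refine mul_left_cancel₀ hk ?_
  linear_combination hb + (2 * (k:ℝ) + 3) * hd

theorem legD : ∀ k : ℕ,
    X * derivative (legP (k + 1)) = derivative (legP k) + C ((k:ℝ) + 1) * legP (k + 1)
  | 0 => by
    apply Polynomial.funext; intro z
    simp [legP]
  | 1 => by
    apply Polynomial.funext; intro z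
    simp only [legP]
    simp [derivative_mul]
    ring
  | (k + 2) => by
    have hd0 := legD k
    have hd1 := legD (k + 1)
    have ht0 := Tst_of k hd0
    apply Polynomial.funext; intro z
    have hb := congrArg (eval z) (diffBonnet (k + 1))
    have hbon := congrArg (eval z) (bonnet (k + 1))
    have hd0' := congrArg (eval z) hd0
    have hd1' := congrArg (eval z) hd1
    have ht0' := congrArg (eval z) ht0
    simp only [eval_mul, eval_add, eval_sub, eval_C, eval_X,
      show k + 1 + 1 = k + 2 from rfl, show k + 1 + 2 = k + 3 from rfl,
      show k + 2 + 1 = k + 3 from rfl] at hb hbon hd0' hd1' ht0' ⊢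
    push_cast at hb hbon hd0' hd1' ht0' ⊢
    have hk : ((k:ℝ) + 3) ≠ 0 := by positivity
    refine mul_left_cancel₀ hk ?_
    linear_combination z * hb + (2 * (k:ℝ) + 5) * z * hd1' + ((k:ℝ) + 3) * hd0' -
      ((k:ℝ) + 3) * ht0' - ((k:ℝ) + 3) * hbon

theorem legT (k : ℕ) :
    derivative (legP (k + 2)) = derivative (legP k) + C (2 * (k:ℝ) + 3) * legP (k + 1) :=
  Tst_of k (legD k)

noncomputable def Iv (p : Polynomial ℝ) : ℝ := ∫ x in (-1:ℝ)..1, p.eval x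

lemma iv_intable (p : Polynomial ℝ) :
    IntervalIntegrable (fun x => p.eval x) MeasureTheory.volume (-1) 1 :=
  p.continuous.intervalIntegrable _ _

lemma Iv_deriv (p : Polynomial ℝ) : Iv (derivative p) = p.eval 1 - p.eval (-1) :=
  intervalIntegral.integral_eq_sub_of_hasDerivAt (fun x _ => p.hasDerivAt x)
    (iv_intable _)

lemma Iv_add (p q : Polynomial ℝ) : Iv (p + q) = Iv p + Iv q := by
  simp only [Iv, eval_add]
  exact intervalIntegral.integral_add (iv_intable p) (iv_intable q)

lemma Iv_Cmul (a : ℝ) (p : Polynomial ℝ) : Iv (C a * p) = a * Iv p := by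
  simp only [Iv, eval_mul, eval_C]
  exact intervalIntegral.integral_const_mul a _

lemma Iv_one : Iv 1 = 2 := by
  simp only [Iv, eval_one]
  rw [intervalIntegral.integral_const]
  norm_num

lemma Iv_X : Iv X = 0 := by
  simp only [Iv, eval_X]
  rw [integral_id]
  norm_num

lemma Iv_sub (p q : Polynomial ℝ) : Iv (p - q) = Iv p - Iv q := by
  simp only [Iv, eval_sub]
  exact intervalIntegral.integral_sub (iv_intable p) (iv_intable q)

lemma Iv_sum {s : Finset ℕ} (f : ℕ → Polynomial ℝ) : Iv (∑ i ∈ s, f i) = ∑ i ∈ s, Iv (f i) := by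
  simp only [Iv, eval_finset_sum]
  exact intervalIntegral.integral_finset_sum (fun i _ => iv_intable _)

lemma Iv_legP_succ (k : ℕ) : Iv (legP (k + 1)) = 0 := by
  cases k with
  | zero => simpa [legP] using Iv_X
  | succ i =>
    have h := legT (i + 1)
    have hc : (2 * ((i + 1 : ℕ) : ℝ) + 3) = 2 * (i : ℝ) + 5 := by push_cast; ring
    rw [hc] at h
    have hq : C (2 * (i : ℝ) + 5) * legP (i + 2) =
        derivative (legP (i + 3)) - derivative (legP (i + 1)) := by
      rw [h]; ring
    have h2 : (2 * (i : ℝ) + 5) * Iv (legP (i + 2)) = 0 := by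
      rw [← Iv_Cmul, hq, Iv_sub, Iv_deriv, Iv_deriv, legP_eval_one, legP_eval_one,
        legP_eval_negone, legP_eval_negone]
      simp [pow_succ]
    have hne : (2 * (i : ℝ) + 5) ≠ 0 := by positivity
    exact (mul_eq_zero.mp h2).resolve_left hne

lemma momzero : ∀ (m k : ℕ), m < k → Iv (X ^ m * legP k) = 0 := by
  intro m
  induction m with
  | zero =>
    intro k hk
    obtain ⟨j, rfl⟩ : ∃ j, k = j + 1 := ⟨k - 1, by omega⟩
    simpa using Iv_legP_succ j
  | succ m ih =>
    intro k hk
    obtain ⟨i, rfl⟩ : ∃ i, k = i + 2 := ⟨k - 2, by omega⟩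
    have hm : m < i + 1 := by omega
    have h := legT (i + 1)
    have hc : (2 * ((i + 1 : ℕ) : ℝ) + 3) = 2 * (i : ℝ) + 5 := by push_cast; ring
    rw [hc] at h
    set q : Polynomial ℝ := legP (i + 3) - legP (i + 1) with hqdef
    have hq : C (2 * (i : ℝ) + 5) * legP (i + 2) = derivative q := by
      rw [hqdef, derivative_sub, h]; ring
    have hX : derivative (X ^ (m + 1) : Polynomial ℝ) = C ((m : ℝ) + 1) * X ^ m := by
      rw [derivative_X_pow]
      push_cast
      simp
    have hkey : C (2 * (i : ℝ) + 5) * (X ^ (m + 1) * legP (i + 2)) =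
        derivative (X ^ (m + 1) * q) - C ((m : ℝ) + 1) * (X ^ m * q) := by
      rw [derivative_mul, hX, ← hq]
      ring
    have hIq : Iv (X ^ m * q) = 0 := by
      rw [hqdef, mul_sub, Iv_sub, ih _ (by omega), ih _ (by omega), sub_zero]
    have h2 : (2 * (i : ℝ) + 5) * Iv (X ^ (m + 1) * legP (i + 2)) = 0 := by
      rw [← Iv_Cmul, hkey, Iv_sub, Iv_Cmul, hIq, mul_zero, sub_zero, Iv_deriv]
      simp only [eval_mul, eval_pow, eval_X, hqdef, eval_sub, legP_eval_one, legP_eval_negone]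
      simp [pow_succ]
    have hne : (2 * (i : ℝ) + 5) ≠ 0 := by positivity
    exact (mul_eq_zero.mp h2).resolve_left hne

lemma ortho_aux (q : Polynomial ℝ) (k : ℕ) (h : q.natDegree < k) : Iv (q * legP k) = 0 := by
  conv_lhs => rw [q.as_sum_range' k h]
  rw [Finset.sum_mul, Iv_sum]
  refine Finset.sum_eq_zero fun m hm => ?_
  rw [← C_mul_X_pow_eq_monomial, mul_assoc, Iv_Cmul, momzero m k (Finset.mem_range.mp hm),
    mul_zero]

lemma ortho_lt (i j : ℕ) (h : i < j) : Iv (legP i * legP j) = 0 :=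
  ortho_aux _ _ (lt_of_le_of_lt (legP_natDegree i) h)

lemma legP_norm : ∀ k : ℕ, Iv (legP k * legP k) = 2 / (2 * (k : ℝ) + 1)
  | 0 => by
    have : legP 0 * legP 0 = (1 : Polynomial ℝ) := by rw [legP]; ring
    rw [this, Iv_one]
    norm_num
  | (k + 1) => by
    have h : C (2 * (k : ℝ) + 3) * (legP (k + 1) * legP (k + 1)) =
        (derivative (legP (k + 2) * legP (k + 1)) - legP (k + 2) * derivative (legP (k + 1))) -
          derivative (legP k) * legP (k + 1) := by
      rw [derivative_mul, legT k]
      ring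
    have hd1 : Iv (legP (k + 2) * derivative (legP (k + 1))) = 0 := by
      rw [mul_comm]
      refine ortho_aux _ _ ?_
      calc (derivative (legP (k + 1))).natDegree ≤ (legP (k + 1)).natDegree - 1 :=
            natDegree_derivative_le _
        _ < k + 2 := by have := legP_natDegree (k + 1); omega
    have hd2 : Iv (derivative (legP k) * legP (k + 1)) = 0 := by
      refine ortho_aux _ _ ?_
      calc (derivative (legP k)).natDegree ≤ (legP k).natDegree - 1 :=
            natDegree_derivative_le _
        _ < k + 1 := by have := legP_natDegree k; omega
    have h2 : (2 * (k : ℝ) + 3) * Iv (legP (k + 1) * legP (k + 1)) = 2 := by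
      rw [← Iv_Cmul, h, Iv_sub, Iv_sub, hd1, hd2, Iv_deriv]
      simp only [eval_mul, legP_eval_one, legP_eval_negone]
      have hodd : ((-1:ℝ)) ^ (k + 2) * (-1) ^ (k + 1) = -1 := by
        rw [← pow_add]
        exact Odd.neg_one_pow ⟨k + 1, by ring⟩
      rw [hodd]
      ring
    have hne : (2 * (k : ℝ) + 3) ≠ 0 := by positivity
    have : Iv (legP (k + 1) * legP (k + 1)) = 2 / (2 * (k : ℝ) + 3) := by
      field_simp at h2 ⊢
      linarith
    rw [this]
    push_cast
    ring_nf

/-- Orthogonality of the Legendre polynomials: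
`∫_{-1}^{1} L i L j = (2/(2i+1)) δᵢⱼ`. -/
theorem legendre_orthogonality (i j : ℕ) :
    (∫ z in (-1 : ℝ)..1, legendreL i z * legendreL j z) =
      if i = j then 2 / (2 * (i : ℝ) + 1) else 0 := by
  have hIv : (∫ z in (-1 : ℝ)..1, legendreL i z * legendreL j z) = Iv (legP i * legP j) := by
    unfold Iv
    simp only [legendreL_eq, eval_mul]
  rw [hIv]
  by_cases hij : i = j
  · subst hij
    rw [if_pos rfl]
    exact legP_norm i
  · rw [if_neg hij]
    rcases Nat.lt_or_ge i j with h | h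
    · exact ortho_lt i j h
    · rw [mul_comm]
      exact ortho_lt j i (by omega)
end
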